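/- Let S ⊆ E^n be nonempty with density ρ(S) ≤ 1/2. If nei(S) + 2(cor(S)+1)(1 − ρ(S)) = n, then the characteristic function χ^S is a perfect 2-coloring of E^n. -/

import Mathlib

open Finset

/-- Weight of a vector in the Boolean cube: the number of ones. -/
def wt {n : ℕ} (y : Fin n → Bool) : ℕ := (Finset.univ.filter fun i => y i = true).card

/-- The face `E^n_y(z) = {x : [x,y] = [z,y]}`: all `x` agreeing with `z` on the
support of `y`. -/
def face {n : ℕ} (y z : Fin n → Bool) : Finset (Fin n → Bool) :=
  Finset.univ.filter fun x => ∀ i, y i = true → x i = z i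

/-- `χ^S` is correlation-immune of order `k`: all faces obtained by fixing `k`
coordinates (i.e. faces `E^n_y(z)` with `wt y = k`) intersect `S` in the same
cardinality. -/
def CorrImmune {n : ℕ} (S : Finset (Fin n → Bool)) (k : ℕ) : Prop :=
  ∀ y₁ z₁ y₂ z₂ : Fin n → Bool, wt y₁ = k → wt y₂ = k →
    (face y₁ z₁ ∩ S).card = (face y₂ z₂ ∩ S).card

/-- `cor S` : the maximum order of correlation immunity of `χ^S`. -/
noncomputable def cor {n : ℕ} (S : Finset (Fin n → Bool)) : ℕ :=
  sSup {k | k ≤ n ∧ CorrImmune S k}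

/-- Density `ρ(S) = |S| / 2^n`. -/
def rho {n : ℕ} (S : Finset (Fin n → Bool)) : ℚ := (S.card : ℚ) / 2 ^ n

/-- `nei S`: the average number of neighbors in `S` of vertices of `S`,
`(1/|S|) ∑_{x∈S} |B(x) ∩ S| - 1`, where `B x` is the Hamming ball of radius 1. -/
def nei {n : ℕ} (S : Finset (Fin n → Bool)) : ℚ :=
  (∑ x ∈ S, ((S.filter fun y => hammingDist x y ≤ 1).card : ℚ)) / (S.card : ℚ) - 1

/-- Characteristic function of `S`, as a rational-valued function. -/
def chi {n : ℕ} (S : Finset (Fin n → Bool)) (x : Fin n → Bool) : ℚ := if x ∈ S then 1 else 0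

/-- Characteristic function of `S` as a 2-coloring (color 1 = membership in `S`). -/
def chiCol {n : ℕ} (S : Finset (Fin n → Bool)) (x : Fin n → Bool) : Fin 2 :=
  if x ∈ S then 1 else 0

/-- `Col` is a perfect coloring with parameter matrix `A`: every vertex of color `i`
has exactly `A i j` neighbors (at Hamming distance 1) of color `j`. -/
def IsPerfectColoring {n : ℕ} (Col : (Fin n → Bool) → Fin 2) (A : Fin 2 → Fin 2 → ℕ) : Prop :=
  ∀ x : Fin n → Bool, ∀ j : Fin 2,
    (Finset.univ.filter fun y => hammingDist x y = 1 ∧ Col y = j).card = A (Col x) j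

/-- Fourier transform `â(v) = ∑_u a(u) (-1)^{⟨u,v⟩}`. -/
def fourierT {n : ℕ} (a : (Fin n → Bool) → ℚ) (v : Fin n → Bool) : ℚ :=
  ∑ u : Fin n → Bool, a u * (-1) ^ ((Finset.univ.filter fun i => u i = true ∧ v i = true).card)

/-- Coordinatewise XOR. -/
def xorv {n : ℕ} (u v : Fin n → Bool) : Fin n → Bool := fun i => xor (u i) (v i)

/-- Weight distribution `B_i(a) = (1/|S|) |{(u,v) ∈ S×S : wt(u⊕v) = i}|`. -/
def Bdist {n : ℕ} (S : Finset (Fin n → Bool)) (i : ℕ) : ℚ :=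
  (((S ×ˢ S).filter fun p => wt (xorv p.1 p.2) = i).card : ℚ) / (S.card : ℚ)

/-- Kravchuk polynomial `P_k(i) = ∑_{j=0}^k (-1)^j C(i,j) C(n-i,k-j)`. -/
def krav (n k i : ℕ) : ℚ :=
  ∑ j ∈ Finset.range (k + 1),
    (-1 : ℚ) ^ j * (Nat.choose i j : ℚ) * (Nat.choose (n - i) (k - j) : ℚ)

/-- MacWilliams transform `B'_k(a) = (1/|S|) ∑_{i=0}^n B_i(a) P_k(i)`. -/
def Bmw {n : ℕ} (S : Finset (Fin n → Bool)) (k : ℕ) : ℚ :=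
  (∑ i ∈ Finset.range (n + 1), Bdist S i * krav n k i) / (S.card : ℚ)

-- === Auxiliary definitions and lemmas for stmt1 ===

def flipv {n : ℕ} (i : Fin n) (x : Fin n → Bool) : Fin n → Bool := Function.update x i (!x i)

def charQ {n : ℕ} (w x : Fin n → Bool) : ℚ := ∏ i, (if w i && x i then (-1 : ℚ) else 1)

def FQ {n : ℕ} (S : Finset (Fin n → Bool)) (w : Fin n → Bool) : ℚ := ∑ u ∈ S, charQ w u

lemma flipv_flipv {n : ℕ} (i : Fin n) (x : Fin n → Bool) : flipv i (flipv i x) = x := by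
  funext j
  by_cases h : j = i
  · subst h; simp [flipv]
  · simp [flipv, Function.update_of_ne h]

lemma flipv_ne {n : ℕ} (i : Fin n) (x : Fin n → Bool) : flipv i x ≠ x := by
  intro h
  have := congrFun h i
  simp [flipv] at this

lemma charQ_comm {n : ℕ} (w x : Fin n → Bool) : charQ w x = charQ x w := by
  unfold charQ; apply Finset.prod_congr rfl; intro i _; rw [Bool.and_comm]

lemma charQ_flip {n : ℕ} (w : Fin n → Bool) (i : Fin n) (x : Fin n → Bool) :
    charQ w (flipv i x) = (if w i then (-1:ℚ) else 1) * charQ w x := by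
  unfold charQ
  rw [← Finset.prod_erase_mul _ _ (Finset.mem_univ i), ← Finset.prod_erase_mul _ _ (Finset.mem_univ i)]
  have h1 : (∏ j ∈ Finset.univ.erase i, (if w j && (flipv i x) j then (-1:ℚ) else 1))
      = ∏ j ∈ Finset.univ.erase i, (if w j && x j then (-1:ℚ) else 1) := by
    apply Finset.prod_congr rfl
    intro j hj
    rw [flipv, Function.update_of_ne (Finset.ne_of_mem_erase hj)]
  rw [h1]
  have h2 : (if w i && (flipv i x) i then (-1:ℚ) else 1)
      = (if w i then (-1:ℚ) else 1) * (if w i && x i then (-1:ℚ) else 1) := by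
    simp only [flipv, Function.update_self]
    cases w i <;> cases x i <;> norm_num
  rw [h2]; ring

lemma charQ_orth {n : ℕ} (u v : Fin n → Bool) :
    ∑ w : Fin n → Bool, charQ w u * charQ w v = if u = v then (2:ℚ)^n else 0 := by
  have h : ∀ w : Fin n → Bool, charQ w u * charQ w v
      = ∏ i, ((if w i && u i then (-1:ℚ) else 1) * (if w i && v i then (-1:ℚ) else 1)) := by
    intro w; rw [Finset.prod_mul_distrib]; rfl
  simp_rw [h]
  have hps := Finset.prod_univ_sum (fun _ : Fin n => (Finset.univ : Finset Bool))
    (fun i b => ((if b && u i then (-1:ℚ) else 1) * (if b && v i then (-1:ℚ) else 1)))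
  rw [Fintype.piFinset_univ] at hps
  rw [← hps]
  have hfac : ∀ i : Fin n, (∑ b ∈ (Finset.univ : Finset Bool),
      ((if b && u i then (-1:ℚ) else 1) * (if b && v i then (-1:ℚ) else 1)))
      = if u i = v i then 2 else 0 := by
    intro i
    rw [Fintype.sum_bool]
    cases hu : u i <;> cases hv : v i <;> norm_num
  rw [Finset.prod_congr rfl (fun i _ => hfac i)]
  by_cases h : u = v
  · subst h; simp [Finset.prod_const]
  · have hex : ∃ i, u i ≠ v i := by
      by_contra hc
      push_neg at hc
      exact h (funext hc)
    obtain ⟨i, hi⟩ := hex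
    rw [if_neg h]
    exact Finset.prod_eq_zero (Finset.mem_univ i) (by simp [hi])

lemma inversion {n : ℕ} (g : (Fin n → Bool) → ℚ)
    (h : ∀ w, ∑ x : Fin n → Bool, g x * charQ w x = 0) : ∀ y, g y = 0 := by
  intro y
  have h2 : ∑ w : Fin n → Bool, (∑ x : Fin n → Bool, g x * charQ w x) * charQ w y = 0 := by
    apply Finset.sum_eq_zero; intro w _; rw [h w, zero_mul]
  have h3 : ∑ w : Fin n → Bool, (∑ x : Fin n → Bool, g x * charQ w x) * charQ w y
      = ∑ x : Fin n → Bool, g x * (∑ w : Fin n → Bool, charQ w x * charQ w y) := by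
    simp_rw [Finset.sum_mul, Finset.mul_sum]
    rw [Finset.sum_comm]
    apply Finset.sum_congr rfl; intro x _
    apply Finset.sum_congr rfl; intro w _; ring
  rw [h3] at h2
  simp_rw [charQ_orth] at h2
  rw [Finset.sum_eq_single y] at h2
  · rw [if_pos rfl] at h2
    rcases mul_eq_zero.mp h2 with h2 | h2
    · exact h2
    · exact absurd h2 (pow_ne_zero n two_ne_zero)
  · intro x _ hxy; rw [if_neg hxy, mul_zero]
  · intro hy; exact absurd (Finset.mem_univ y) hy

lemma sum_charQ {n : ℕ} (w : Fin n → Bool) :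
    ∑ x : Fin n → Bool, charQ w x = if w = (fun _ => false) then (2:ℚ)^n else 0 := by
  have h : ∀ x : Fin n → Bool, charQ w x = charQ x w * charQ x (fun _ => false) := by
    intro x
    rw [charQ_comm]
    have h0 : charQ x (fun _ => false) = 1 := by unfold charQ; simp
    rw [h0, mul_one]
  simp_rw [h]
  exact charQ_orth w (fun _ => false)

lemma flipv_eq_iff {n : ℕ} (i : Fin n) (u v : Fin n → Bool) :
    flipv i u = v ↔ (Finset.univ.filter fun j => u j ≠ v j) = {i} := by
  constructor
  · intro h
    ext j
    simp only [Finset.mem_filter, Finset.mem_univ, true_and, Finset.mem_singleton]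
    constructor
    · intro hj
      by_contra hji
      have := congrFun h j
      rw [flipv, Function.update_of_ne hji] at this
      exact hj this
    · intro hj; subst hj
      have := congrFun h j
      rw [flipv, Function.update_self] at this
      rw [← this]; cases u j <;> simp
  · intro h
    funext j
    by_cases hji : j = i
    · subst hji
      have hmem : j ∈ Finset.univ.filter fun k => u k ≠ v k := by
        rw [h]; exact Finset.mem_singleton_self j
      simp only [Finset.mem_filter] at hmem
      rw [flipv, Function.update_self]
      revert hmem; cases u j <;> cases v j <;> simp
    · have hnm : j ∉ Finset.univ.filter fun k => u k ≠ v k := by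
        rw [h]; simp [hji]
      simp only [Finset.mem_filter, Finset.mem_univ, true_and, not_not] at hnm
      rw [flipv, Function.update_of_ne hji, hnm]

lemma card_flip_eq {n : ℕ} (u v : Fin n → Bool) :
    (Finset.univ.filter fun i => flipv i u = v).card = if hammingDist u v = 1 then 1 else 0 := by
  have hd : hammingDist u v = (Finset.univ.filter fun j => u j ≠ v j).card := rfl
  by_cases h : hammingDist u v = 1
  · rw [if_pos h]
    rw [hd] at h
    obtain ⟨i₀, hi₀⟩ := Finset.card_eq_one.mp h
    have he : (Finset.univ.filter fun i => flipv i u = v) = {i₀} := by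
      ext i
      simp only [Finset.mem_filter, Finset.mem_univ, true_and, Finset.mem_singleton]
      rw [flipv_eq_iff, hi₀]
      exact ⟨fun hh => (Finset.singleton_inj.mp hh.symm), fun hh => by rw [hh]⟩
    rw [he, Finset.card_singleton]
  · rw [if_neg h]
    rw [Finset.card_eq_zero, Finset.filter_eq_empty_iff]
    intro i _
    rw [flipv_eq_iff]
    intro hc
    apply h
    rw [hd, hc, Finset.card_singleton]

lemma wt_update {n : ℕ} (y : Fin n → Bool) (i : Fin n) (hi : y i = false) :
    wt (Function.update y i true) = wt y + 1 := by
  unfold wt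
  have h : (Finset.univ.filter fun j => Function.update y i true j = true)
      = insert i (Finset.univ.filter fun j => y j = true) := by
    ext j
    simp only [Finset.mem_filter, Finset.mem_univ, true_and, Finset.mem_insert]
    by_cases hji : j = i
    · subst hji; simp [Function.update_self]
    · rw [Function.update_of_ne hji]; simp [hji]
  rw [h, Finset.card_insert_of_notMem (by simp [hi])]

lemma face_split {n : ℕ} (S : Finset (Fin n → Bool)) (y z : Fin n → Bool) (i : Fin n)
    (hi : y i = false) :
    (face y z ∩ S).card
      = (face (Function.update y i true) (Function.update z i false) ∩ S).card
      + (face (Function.update y i true) (Function.update z i true) ∩ S).card := by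
  rw [← Finset.card_union_of_disjoint]
  · congr 1
    ext x
    simp only [Finset.mem_union, Finset.mem_inter, face, Finset.mem_filter, Finset.mem_univ,
      true_and]
    constructor
    · rintro ⟨hface, hxS⟩
      cases hx : x i
      · left
        refine ⟨fun j hj => ?_, hxS⟩
        by_cases hji : j = i
        · subst hji; rw [Function.update_self]; exact hx
        · rw [Function.update_of_ne hji] at hj ⊢; exact hface j hj
      · right
        refine ⟨fun j hj => ?_, hxS⟩
        by_cases hji : j = i
        · subst hji; rw [Function.update_self]; exact hx
        · rw [Function.update_of_ne hji] at hj ⊢; exact hface j hj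
    · rintro (⟨hface, hxS⟩ | ⟨hface, hxS⟩) <;>
      · refine ⟨fun j hj => ?_, hxS⟩
        have hji : j ≠ i := fun hc => by rw [hc, hi] at hj; exact Bool.false_ne_true hj
        have := hface j (by rw [Function.update_of_ne hji]; exact hj)
        rwa [Function.update_of_ne hji] at this
  · rw [Finset.disjoint_left]
    intro x hx1 hx2
    rw [Finset.mem_inter] at hx1 hx2
    replace hx1 := hx1.1
    replace hx2 := hx2.1
    simp only [face, Finset.mem_filter] at hx1 hx2
    have h1 := hx1.2 i (by rw [Function.update_self])
    have h2 := hx2.2 i (by rw [Function.update_self])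
    rw [Function.update_self] at h1 h2
    rw [h1] at h2
    exact Bool.false_ne_true h2

lemma exists_false_of_wt_lt {n : ℕ} (y : Fin n → Bool) (h : wt y < n) : ∃ i, y i = false := by
  by_contra hc
  push_neg at hc
  have hall : ∀ i, y i = true := fun i => by
    cases hy : y i
    · exact absurd hy (hc i)
    · rfl
  have huniv : (Finset.univ.filter fun i => y i = true) = Finset.univ :=
    Finset.filter_true_of_mem (fun i _ => hall i)
  unfold wt at h
  rw [huniv, Finset.card_univ, Fintype.card_fin] at h
  exact lt_irrefl _ h

lemma corrImmune_mono {n : ℕ} (S : Finset (Fin n → Bool)) (k : ℕ) (hk : k + 1 ≤ n)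
    (h : CorrImmune S (k + 1)) : CorrImmune S k := by
  intro y₁ z₁ y₂ z₂ h₁ h₂
  obtain ⟨i₁, hi₁⟩ := exists_false_of_wt_lt y₁ (h₁ ▸ hk)
  obtain ⟨i₂, hi₂⟩ := exists_false_of_wt_lt y₂ (h₂ ▸ hk)
  rw [face_split S y₁ z₁ i₁ hi₁, face_split S y₂ z₂ i₂ hi₂]
  have w₁ : wt (Function.update y₁ i₁ true) = k + 1 := by rw [wt_update y₁ i₁ hi₁, h₁]
  have w₂ : wt (Function.update y₂ i₂ true) = k + 1 := by rw [wt_update y₂ i₂ hi₂, h₂]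
  rw [h _ _ _ (Function.update z₂ i₂ false) w₁ w₂, h _ _ _ (Function.update z₂ i₂ true) w₁ w₂]

lemma corrImmune_zero {n : ℕ} (S : Finset (Fin n → Bool)) : CorrImmune S 0 := by
  intro y₁ z₁ y₂ z₂ h₁ h₂
  have hy : ∀ (y : Fin n → Bool), wt y = 0 → ∀ z, face y z = Finset.univ := by
    intro y hy z
    unfold wt at hy
    rw [Finset.card_eq_zero] at hy
    apply Finset.filter_true_of_mem
    intro x _ i hyi
    exact absurd (Finset.mem_filter.mpr ⟨Finset.mem_univ i, hyi⟩) (by rw [hy]; simp)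
  rw [hy y₁ h₁ z₁, hy y₂ h₂ z₂]

lemma cor_spec {n : ℕ} (S : Finset (Fin n → Bool)) : cor S ≤ n ∧ CorrImmune S (cor S) := by
  have hmem : cor S ∈ {k | k ≤ n ∧ CorrImmune S k} := by
    apply Nat.sSup_mem
    · exact ⟨0, Nat.zero_le n, corrImmune_zero S⟩
    · exact ⟨n, fun k hk => hk.1⟩
  exact hmem

lemma corrImmune_of_le_cor {n : ℕ} (S : Finset (Fin n → Bool)) :
    ∀ k ≤ cor S, CorrImmune S k := by
  obtain ⟨hle, him⟩ := cor_spec S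
  suffices h : ∀ m, m ≤ n → CorrImmune S m → ∀ k ≤ m, CorrImmune S k by
    exact h (cor S) hle him
  intro m
  induction m with
  | zero => intro _ h k hk; rw [Nat.le_zero] at hk; subst hk; exact h
  | succ m ih =>
    intro hmn him k hk
    rcases Nat.eq_or_lt_of_le hk with h | h
    · subst h; exact him
    · exact ih (le_of_lt (Nat.lt_of_lt_of_le (Nat.lt_succ_self m) hmn))
        (corrImmune_mono S m hmn him) k (Nat.lt_succ_iff.mp h)

def msk {n : ℕ} (w u : Fin n → Bool) : Fin n → Bool := fun i => w i && u i

def sgn {n : ℕ} (p : Fin n → Bool) : ℚ := ∏ i, (if p i then (-1:ℚ) else 1)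

lemma sgn_eq_charQ {n : ℕ} (p : Fin n → Bool) : sgn p = charQ (fun _ => true) p := by
  unfold sgn charQ; simp

lemma sgn_flip {n : ℕ} (i : Fin n) (p : Fin n → Bool) : sgn (flipv i p) = - sgn p := by
  rw [sgn_eq_charQ, sgn_eq_charQ, charQ_flip]; simp

lemma charQ_eq_sgn_msk {n : ℕ} (w u : Fin n → Bool) : charQ w u = sgn (msk w u) := rfl

lemma msk_idem {n : ℕ} (w u : Fin n → Bool) : msk w (msk w u) = msk w u := by
  funext i; simp [msk, Bool.and_assoc]

lemma msk_flip {n : ℕ} (w : Fin n → Bool) (i : Fin n) (hw : w i = true) (p : Fin n → Bool) :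
    msk w (flipv i p) = flipv i (msk w p) := by
  funext j
  by_cases hji : j = i
  · subst hji; simp [msk, flipv, hw]
  · simp [msk, flipv, Function.update_of_ne hji]

lemma fiber_eq_face {n : ℕ} (S : Finset (Fin n → Bool)) (w p : Fin n → Bool)
    (hp : msk w p = p) :
    S.filter (fun u => msk w u = p) = face w p ∩ S := by
  ext x
  simp only [Finset.mem_filter, Finset.mem_inter, face, Finset.mem_univ, true_and]
  constructor
  · rintro ⟨hxS, hx⟩
    refine ⟨fun i hwi => ?_, hxS⟩
    have := congrFun hx i
    simp [msk, hwi] at this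
    exact this
  · rintro ⟨hx, hxS⟩
    refine ⟨hxS, ?_⟩
    funext i
    have hpi := congrFun hp i
    simp only [msk] at hpi ⊢
    cases hwi : w i
    · simp only [Bool.false_and]
      rw [← hpi, hwi, Bool.false_and]
    · simp only [Bool.true_and]
      exact hx i hwi

lemma F_vanish {n : ℕ} (S : Finset (Fin n → Bool)) (w : Fin n → Bool)
    (him : CorrImmune S (wt w)) (hw : 1 ≤ wt w) :
    FQ S w = 0 := by
  have hne : (Finset.univ.filter fun i => w i = true).Nonempty := by
    rw [← Finset.card_pos]; exact hw
  obtain ⟨i₀, hi₀⟩ := hne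
  rw [Finset.mem_filter] at hi₀
  have hwi₀ : w i₀ = true := hi₀.2
  unfold FQ
  rw [← Finset.sum_fiberwise S (fun u => msk w u) (fun u => charQ w u)]
  have hinner : ∀ p : Fin n → Bool,
      ∑ u ∈ S.filter (fun u => msk w u = p), charQ w u
        = sgn p * (S.filter (fun u => msk w u = p)).card := by
    intro p
    rw [Finset.sum_congr rfl (fun u hu => by
      rw [charQ_eq_sgn_msk, (Finset.mem_filter.mp hu).2])]
    rw [Finset.sum_const, nsmul_eq_mul, mul_comm]
  simp_rw [hinner]
  apply Finset.sum_involution (fun p _ => flipv i₀ p)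
  · intro p _
    have hcard : (S.filter (fun u => msk w u = p)).card
        = (S.filter (fun u => msk w u = flipv i₀ p)).card := by
      by_cases hp : msk w p = p
      · have hp' : msk w (flipv i₀ p) = flipv i₀ p := by
          rw [msk_flip w i₀ hwi₀, hp]
        rw [fiber_eq_face S w p hp, fiber_eq_face S w _ hp']
        exact him w p w (flipv i₀ p) rfl rfl
      · have h1 : S.filter (fun u => msk w u = p) = ∅ := by
          rw [Finset.filter_eq_empty_iff]
          intro u _ hc
          exact hp (by rw [← hc, msk_idem])
        have h2 : S.filter (fun u => msk w u = flipv i₀ p) = ∅ := by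
          rw [Finset.filter_eq_empty_iff]
          intro u _ hc
          apply hp
          have h3 : msk w (flipv i₀ p) = flipv i₀ p := by rw [← hc, msk_idem]
          rw [msk_flip w i₀ hwi₀] at h3
          have h4 := congrArg (flipv i₀) h3
          rwa [flipv_flipv, flipv_flipv] at h4
        rw [h1, h2]
    rw [sgn_flip, ← hcard]; ring
  · intro p _ _; exact flipv_ne i₀ p
  · intro p _; exact Finset.mem_univ _
  · intro p _; exact flipv_flipv i₀ p

lemma wt_sum {n : ℕ} (w : Fin n → Bool) :
    ∑ i : Fin n, (if w i then (-1:ℚ) else 1) = (n : ℚ) - 2 * (wt w : ℚ) := by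
  have h : ∀ i : Fin n, (if w i then (-1:ℚ) else 1) = 1 - 2 * (if w i = true then (1:ℚ) else 0) := by
    intro i; cases w i <;> norm_num
  simp_rw [h]
  rw [Finset.sum_sub_distrib, Finset.sum_const, ← Finset.mul_sum, Finset.sum_boole]
  simp [wt, Finset.card_univ]

lemma weighted_orth {n : ℕ} (u v : Fin n → Bool) :
    ∑ w : Fin n → Bool, ((n : ℚ) - 2 * (wt w : ℚ)) * (charQ w u * charQ w v)
      = (2:ℚ)^n * (if hammingDist u v = 1 then 1 else 0) := by
  have h1 : ∀ w : Fin n → Bool, ((n : ℚ) - 2 * (wt w : ℚ)) * (charQ w u * charQ w v)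
      = ∑ i : Fin n, charQ w (flipv i u) * charQ w v := by
    intro w
    rw [← wt_sum w, Finset.sum_mul]
    apply Finset.sum_congr rfl
    intro i _
    rw [charQ_flip]; ring
  simp_rw [h1]
  rw [Finset.sum_comm]
  have h2 : ∀ i : Fin n, ∑ w : Fin n → Bool, charQ w (flipv i u) * charQ w v
      = if flipv i u = v then (2:ℚ)^n else 0 := fun i => charQ_orth _ _
  simp_rw [h2]
  rw [← Finset.sum_filter, Finset.sum_const, nsmul_eq_mul, mul_comm, card_flip_eq]
  by_cases h : hammingDist u v = 1 <;> simp [h]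

lemma parseval {n : ℕ} (S : Finset (Fin n → Bool)) :
    ∑ w : Fin n → Bool, (FQ S w)^2 = (2:ℚ)^n * S.card := by
  have h : ∀ w : Fin n → Bool, (FQ S w)^2
      = ∑ u ∈ S, ∑ v ∈ S, charQ w u * charQ w v := by
    intro w
    rw [FQ, sq, Finset.sum_mul_sum]
  simp_rw [h]
  rw [Finset.sum_comm]
  have huv : ∀ u ∈ S, ∑ w : Fin n → Bool, ∑ v ∈ S, charQ w u * charQ w v = (2:ℚ)^n := by
    intro u hu
    rw [Finset.sum_comm]
    have h3 : ∀ v ∈ S, ∑ w : Fin n → Bool, charQ w u * charQ w v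
        = if u = v then (2:ℚ)^n else 0 := fun v _ => charQ_orth u v
    rw [Finset.sum_congr rfl h3]
    rw [Finset.sum_ite_eq S u (fun _ => (2:ℚ)^n), if_pos hu]
  rw [Finset.sum_congr rfl huv, Finset.sum_const, nsmul_eq_mul, mul_comm]

lemma weighted_parseval {n : ℕ} (S : Finset (Fin n → Bool)) :
    ∑ w : Fin n → Bool, ((n : ℚ) - 2 * (wt w : ℚ)) * (FQ S w)^2
      = (2:ℚ)^n * ∑ x ∈ S, ((S.filter fun y => hammingDist x y = 1).card : ℚ) := by
  have h : ∀ w : Fin n → Bool, ((n : ℚ) - 2 * (wt w : ℚ)) * (FQ S w)^2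
      = ∑ u ∈ S, ∑ v ∈ S, ((n : ℚ) - 2 * (wt w : ℚ)) * (charQ w u * charQ w v) := by
    intro w
    rw [FQ, sq, Finset.sum_mul_sum, Finset.mul_sum]
    apply Finset.sum_congr rfl; intro u _
    rw [Finset.mul_sum]
  simp_rw [h]
  rw [Finset.sum_comm]
  have h2 : ∀ u ∈ S, ∑ w : Fin n → Bool, ∑ v ∈ S, ((n : ℚ) - 2 * (wt w : ℚ)) * (charQ w u * charQ w v)
      = (2:ℚ)^n * ((S.filter fun y => hammingDist u y = 1).card : ℚ) := by
    intro u _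
    rw [Finset.sum_comm]
    have h3 : ∀ v ∈ S, ∑ w : Fin n → Bool, ((n : ℚ) - 2 * (wt w : ℚ)) * (charQ w u * charQ w v)
        = (2:ℚ)^n * (if hammingDist u v = 1 then 1 else 0) := fun v _ => weighted_orth u v
    rw [Finset.sum_congr rfl h3, ← Finset.mul_sum]
    congr 1
    rw [Finset.sum_ite, Finset.sum_const, Finset.sum_const]
    simp
  rw [Finset.sum_congr rfl h2, ← Finset.mul_sum]

lemma card_nbr {n : ℕ} (x : Fin n → Bool) (P : (Fin n → Bool) → Prop) [DecidablePred P] :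
    (Finset.univ.filter fun y => hammingDist x y = 1 ∧ P y).card
      = (Finset.univ.filter fun i => P (flipv i x)).card := by
  symm
  apply Finset.card_nbij (fun i => flipv i x)
  · intro i hi
    simp only [Finset.mem_coe, Finset.mem_filter, Finset.mem_univ, true_and] at hi ⊢
    refine ⟨?_, hi⟩
    have h := (flipv_eq_iff i x (flipv i x)).mp rfl
    show (Finset.univ.filter fun j => x j ≠ (flipv i x) j).card = 1
    rw [h, Finset.card_singleton]
  · intro i _ j _ h
    have h1 := (flipv_eq_iff i x (flipv j x)).mp h
    have h2 := (flipv_eq_iff j x (flipv j x)).mp rfl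
    rw [h2] at h1
    exact Finset.singleton_inj.mp h1.symm
  · intro y hy
    simp only [Finset.coe_filter, Set.mem_setOf_eq, Finset.mem_univ, true_and] at hy
    obtain ⟨hd, hP⟩ := hy
    have hone : (Finset.univ.filter fun j => x j ≠ y j).card = 1 := hd
    obtain ⟨i, hi⟩ := Finset.card_eq_one.mp hone
    have hfy : flipv i x = y := (flipv_eq_iff i x y).mpr hi
    refine ⟨i, ?_, hfy⟩
    simp only [Finset.coe_filter, Set.mem_setOf_eq, Finset.mem_univ, true_and]
    rw [hfy]; exact hP

lemma card_nbr_total {n : ℕ} (x : Fin n → Bool) :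
    (Finset.univ.filter fun y => hammingDist x y = 1).card = n := by
  have h := card_nbr x (fun _ => True)
  simp only [and_true, Finset.filter_true] at h
  rw [h, Finset.card_univ, Fintype.card_fin]

lemma sum_chi_flip {n : ℕ} (S : Finset (Fin n → Bool)) (x : Fin n → Bool) :
    ∑ i : Fin n, chi S (flipv i x)
      = ((Finset.univ.filter fun y => hammingDist x y = 1 ∧ y ∈ S).card : ℚ) := by
  rw [card_nbr x (fun y => y ∈ S)]
  unfold chi
  rw [Finset.sum_boole]

lemma sum_chi_charQ {n : ℕ} (S : Finset (Fin n → Bool)) (w : Fin n → Bool) :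
    ∑ x : Fin n → Bool, chi S x * charQ w x = FQ S w := by
  unfold chi FQ
  rw [← Finset.sum_filter_add_sum_filter_not Finset.univ (fun x => x ∈ S)]
  have h1 : ∑ x ∈ Finset.univ.filter (fun x => x ∈ S),
      (if x ∈ S then (1:ℚ) else 0) * charQ w x = ∑ u ∈ S, charQ w u := by
    rw [Finset.filter_mem_eq_inter, Finset.univ_inter]
    apply Finset.sum_congr rfl
    intro u hu; rw [if_pos hu, one_mul]
  have h2 : ∑ x ∈ Finset.univ.filter (fun x => ¬ x ∈ S),
      (if x ∈ S then (1:ℚ) else 0) * charQ w x = 0 := by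
    apply Finset.sum_eq_zero
    intro x hx
    rw [Finset.mem_filter] at hx
    rw [if_neg hx.2, zero_mul]
  rw [h1, h2, add_zero]

/-- For nonempty `S ⊆ E^n` with `ρ(S) ≤ 1/2`, if
`nei(S) + 2(cor(S)+1)(1 - ρ(S)) = n` then `χ^S` is a perfect 2-coloring. -/
theorem stmt1 {n : ℕ} (S : Finset (Fin n → Bool)) (hS : S.Nonempty) (hρ : rho S ≤ 1 / 2)
    (heq : nei S + 2 * ((cor S : ℚ) + 1) * (1 - rho S) = (n : ℚ)) :
    ∃ A : Fin 2 → Fin 2 → ℕ, IsPerfectColoring (chiCol S) A := by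
  classical
  obtain ⟨hcorn, hcorim⟩ := cor_spec S
  have hs0 : (0:ℚ) < (S.card : ℚ) := by exact_mod_cast Finset.card_pos.mpr hS
  have hsne : ((S.card : ℚ)) ≠ 0 := ne_of_gt hs0
  have hN0 : (0:ℚ) < (2:ℚ)^n := by positivity
  have hNne : ((2:ℚ)^n) ≠ 0 := ne_of_gt hN0
  have hwtz0 : wt (fun _ : Fin n => false) = 0 := by simp [wt]
  have hFz0 : FQ S (fun _ => false) = (S.card : ℚ) := by
    unfold FQ
    have h : ∀ u ∈ S, charQ (fun _ => false) u = 1 := by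
      intro u _; unfold charQ; simp
    rw [Finset.sum_congr rfl h, Finset.sum_const, nsmul_eq_mul, mul_one]
  -- nei S = Dq / |S|
  have hnei : nei S
      = (∑ x ∈ S, ((S.filter fun y => hammingDist x y = 1).card : ℚ)) / (S.card : ℚ) := by
    unfold nei
    have h1 : ∀ x ∈ S, ((S.filter fun y => hammingDist x y ≤ 1).card : ℚ)
        = ((S.filter fun y => hammingDist x y = 1).card : ℚ) + 1 := by
      intro x hx
      have hset : S.filter (fun y => hammingDist x y ≤ 1)
          = insert x (S.filter fun y => hammingDist x y = 1) := by
        ext y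
        simp only [Finset.mem_filter, Finset.mem_insert]
        constructor
        · rintro ⟨hyS, hd⟩
          rcases Nat.le_one_iff_eq_zero_or_eq_one.mp hd with h | h
          · left; exact (hammingDist_eq_zero.mp h).symm
          · right; exact ⟨hyS, h⟩
        · rintro (h | ⟨hyS, h⟩)
          · subst h; exact ⟨hx, by simp [hammingDist_self]⟩
          · exact ⟨hyS, le_of_eq h⟩
      rw [hset, Finset.card_insert_of_notMem (by simp [hammingDist_self])]
      push_cast; ring
    rw [Finset.sum_congr rfl h1, Finset.sum_add_distrib, Finset.sum_const, nsmul_eq_mul, mul_one]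
    field_simp
    ring
  -- key polynomial identity from heq
  have hkey : (2:ℚ)^n * (∑ x ∈ S, ((S.filter fun y => hammingDist x y = 1).card : ℚ))
      + 2*((cor S : ℚ)+1)*((S.card : ℚ)*(2:ℚ)^n - (S.card : ℚ)^2)
      = (n:ℚ) * (2:ℚ)^n * (S.card : ℚ) := by
    rw [hnei] at heq
    unfold rho at heq
    field_simp at heq
    linear_combination heq
  -- erase-zero sums
  have e1 : ∑ w ∈ Finset.univ.erase (fun _ : Fin n => false), (FQ S w)^2
      = (2:ℚ)^n * (S.card : ℚ) - (S.card : ℚ)^2 := by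
    have hp := parseval S
    rw [← Finset.sum_erase_add _ _ (Finset.mem_univ (fun _ : Fin n => false)), hFz0] at hp
    nlinarith [hp]
  have e2 : (n:ℚ) * ((2:ℚ)^n * (S.card : ℚ))
      - 2 * (∑ w ∈ Finset.univ.erase (fun _ : Fin n => false), (wt w : ℚ) * (FQ S w)^2)
      = (2:ℚ)^n * (∑ x ∈ S, ((S.filter fun y => hammingDist x y = 1).card : ℚ)) := by
    have hw := weighted_parseval S
    have hsp : ∑ w : Fin n → Bool, (wt w : ℚ) * (FQ S w)^2
        = ∑ w ∈ Finset.univ.erase (fun _ : Fin n => false), (wt w : ℚ) * (FQ S w)^2 := by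
      rw [← Finset.sum_erase_add _ _ (Finset.mem_univ (fun _ : Fin n => false)), hwtz0]
      simp
    have hterm : ∀ w ∈ (Finset.univ : Finset (Fin n → Bool)),
        ((n:ℚ) - 2*(wt w:ℚ))*(FQ S w)^2 = (n:ℚ)*(FQ S w)^2 - 2*((wt w:ℚ)*(FQ S w)^2) :=
      fun w _ => by ring
    rw [Finset.sum_congr rfl hterm, Finset.sum_sub_distrib, ← Finset.mul_sum, ← Finset.mul_sum,
      parseval S, hsp] at hw
    exact hw
  -- the equality sum
  have hG : ∑ w ∈ Finset.univ.erase (fun _ : Fin n => false),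
      ((wt w : ℚ) - ((cor S : ℚ)+1)) * (FQ S w)^2 = 0 := by
    have hterm : ∀ w ∈ Finset.univ.erase (fun _ : Fin n => false),
        ((wt w : ℚ) - ((cor S : ℚ)+1)) * (FQ S w)^2
          = (wt w : ℚ) * (FQ S w)^2 - ((cor S : ℚ)+1) * (FQ S w)^2 :=
      fun w _ => by ring
    rw [Finset.sum_congr rfl hterm, Finset.sum_sub_distrib, ← Finset.mul_sum, e1]
    linear_combination (-(1/2:ℚ)) * e2 - (1/2:ℚ) * hkey
  -- positivity of weights off the support levels ≤ cor S
  have hwpos : ∀ w : Fin n → Bool, w ≠ (fun _ => false) → 1 ≤ wt w := by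
    intro w hw
    rcases Nat.eq_zero_or_pos (wt w) with h | h
    · exfalso
      apply hw
      funext i
      unfold wt at h
      rw [Finset.card_eq_zero] at h
      have : i ∉ Finset.univ.filter fun j => w j = true := by rw [h]; simp
      simp only [Finset.mem_filter, Finset.mem_univ, true_and] at this
      cases hwi : w i
      · rfl
      · exact absurd hwi this
    · exact h
  have hnonneg : ∀ w ∈ Finset.univ.erase (fun _ : Fin n => false),
      0 ≤ ((wt w : ℚ) - ((cor S : ℚ)+1)) * (FQ S w)^2 := by
    intro w hw
    rw [Finset.mem_erase] at hw
    by_cases hcw : wt w ≤ cor S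
    · rw [F_vanish S w (corrImmune_of_le_cor S (wt w) hcw) (hwpos w hw.1)]
      simp
    · apply mul_nonneg _ (sq_nonneg _)
      rw [sub_nonneg]
      have : cor S + 1 ≤ wt w := Nat.succ_le_of_lt (Nat.lt_of_not_le hcw)
      exact_mod_cast this
  have hall := (Finset.sum_eq_zero_iff_of_nonneg hnonneg).mp hG
  have hsupp : ∀ w : Fin n → Bool, w ≠ (fun _ => false) → FQ S w ≠ 0 →
      (wt w : ℚ) = (cor S : ℚ) + 1 := by
    intro w hw hF
    have h := hall w (Finset.mem_erase.mpr ⟨hw, Finset.mem_univ _⟩)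
    rcases mul_eq_zero.mp h with h | h
    · linarith [sub_eq_zero.mp h]
    · exact absurd (pow_eq_zero_iff (two_ne_zero)).mp (by exact fun hh => hF (hh h))
  -- transform of the defect function vanishes
  have hzero : ∀ w : Fin n → Bool,
      ∑ x : Fin n → Bool,
        ((∑ i : Fin n, chi S (flipv i x))
          - ((n:ℚ) - 2*((cor S : ℚ)+1)) * chi S x
          - 2*((cor S : ℚ)+1) * ((S.card : ℚ)/(2:ℚ)^n)) * charQ w x = 0 := by
    intro w
    have hT1 : ∑ x : Fin n → Bool, (∑ i : Fin n, chi S (flipv i x)) * charQ w x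
        = ((n:ℚ) - 2 * (wt w : ℚ)) * FQ S w := by
      simp_rw [Finset.sum_mul]
      rw [Finset.sum_comm]
      have hi : ∀ i : Fin n, ∑ x : Fin n → Bool, chi S (flipv i x) * charQ w x
          = (if w i then (-1:ℚ) else 1) * FQ S w := by
        intro i
        have hb : Function.Bijective (flipv i : (Fin n → Bool) → (Fin n → Bool)) :=
          Function.Involutive.bijective (flipv_flipv i)
        have he : ∑ x : Fin n → Bool, chi S (flipv i x) * charQ w x
            = ∑ y : Fin n → Bool, chi S y * charQ w (flipv i y) := by
          apply Fintype.sum_bijective (flipv i) hb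
          intro x
          rw [flipv_flipv]
        rw [he]
        simp_rw [charQ_flip w i]
        rw [← sum_chi_charQ S w, Finset.mul_sum]
        apply Finset.sum_congr rfl
        intro x _; ring
      rw [Finset.sum_congr rfl (fun i _ => hi i), ← Finset.sum_mul, wt_sum]
    have hT2 : ∑ x : Fin n → Bool, (((n:ℚ) - 2*((cor S : ℚ)+1)) * chi S x) * charQ w x
        = ((n:ℚ) - 2*((cor S : ℚ)+1)) * FQ S w := by
      simp_rw [mul_assoc]
      rw [← Finset.mul_sum, sum_chi_charQ]
    have hT3 : ∑ x : Fin n → Bool, (2*((cor S : ℚ)+1) * ((S.card : ℚ)/(2:ℚ)^n)) * charQ w x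
        = 2*((cor S : ℚ)+1) * ((S.card : ℚ)/(2:ℚ)^n)
          * (if w = (fun _ => false) then (2:ℚ)^n else 0) := by
      rw [← Finset.mul_sum, sum_charQ]
    have hexp : ∀ x ∈ (Finset.univ : Finset (Fin n → Bool)),
        ((∑ i : Fin n, chi S (flipv i x))
          - ((n:ℚ) - 2*((cor S : ℚ)+1)) * chi S x
          - 2*((cor S : ℚ)+1) * ((S.card : ℚ)/(2:ℚ)^n)) * charQ w x
        = (∑ i : Fin n, chi S (flipv i x)) * charQ w x
          - (((n:ℚ) - 2*((cor S : ℚ)+1)) * chi S x) * charQ w x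
          - (2*((cor S : ℚ)+1) * ((S.card : ℚ)/(2:ℚ)^n)) * charQ w x :=
      fun x _ => by ring
    rw [Finset.sum_congr rfl hexp, Finset.sum_sub_distrib, Finset.sum_sub_distrib,
      hT1, hT2, hT3]
    by_cases hw : w = (fun _ : Fin n => false)
    · subst hw
      rw [if_pos rfl, hwtz0, hFz0]
      push_cast
      field_simp
      ring
    · rw [if_neg hw, mul_zero, sub_zero]
      by_cases hF : FQ S w = 0
      · rw [hF]; ring
      · rw [hsupp w hw hF]; ring
  have hpt := inversion _ hzero
  -- counting neighbours
  have hcnt : ∀ x : Fin n → Bool,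
      ((Finset.univ.filter fun y => hammingDist x y = 1 ∧ y ∈ S).card : ℚ)
        = ((n:ℚ) - 2*((cor S : ℚ)+1)) * chi S x
          + 2*((cor S : ℚ)+1) * ((S.card : ℚ)/(2:ℚ)^n) := by
    intro x
    have h := hpt x
    rw [← sum_chi_flip S x]
    linarith [h]
  -- the two constants
  obtain ⟨x₀, hx₀⟩ := hS
  have hcard_lt : S.card < 2^n := by
    unfold rho at hρ
    have h2 : (S.card : ℚ) ≤ (2:ℚ)^n / 2 := by
      rw [div_le_div_iff₀ hN0 (by norm_num : (0:ℚ) < 2)] at hρ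
      linarith
    have h3 : (S.card : ℚ) < (2:ℚ)^n := by linarith
    have h4 : ((2:ℚ))^n = ((2^n : ℕ) : ℚ) := by push_cast; ring
    rw [h4] at h3
    exact_mod_cast h3
  have hcompl : ∃ x₁ : Fin n → Bool, x₁ ∉ S := by
    by_contra hc
    push_neg at hc
    have : (Finset.univ : Finset (Fin n → Bool)).card ≤ S.card :=
      Finset.card_le_card (fun x _ => hc x)
    rw [Finset.card_univ] at this
    simp only [Fintype.card_fun, Fintype.card_bool, Fintype.card_fin] at this
    omega
  obtain ⟨x₁, hx₁⟩ := hcompl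
  set a : ℕ := (Finset.univ.filter fun y => hammingDist x₀ y = 1 ∧ y ∈ S).card with ha
  set b : ℕ := (Finset.univ.filter fun y => hammingDist x₁ y = 1 ∧ y ∈ S).card with hb
  have hina : ∀ x : Fin n → Bool, x ∈ S →
      (Finset.univ.filter fun y => hammingDist x y = 1 ∧ y ∈ S).card = a := by
    intro x hx
    have h1 := hcnt x
    have h2 := hcnt x₀
    rw [chi, if_pos hx] at h1
    rw [chi, if_pos hx₀] at h2
    have : ((Finset.univ.filter fun y => hammingDist x y = 1 ∧ y ∈ S).card : ℚ) = (a : ℚ) := by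
      rw [h1, ha]; rw [h2]
    exact_mod_cast this
  have hinb : ∀ x : Fin n → Bool, x ∉ S →
      (Finset.univ.filter fun y => hammingDist x y = 1 ∧ y ∈ S).card = b := by
    intro x hx
    have h1 := hcnt x
    have h2 := hcnt x₁
    rw [chi, if_neg hx] at h1
    rw [chi, if_neg hx₁] at h2
    have : ((Finset.univ.filter fun y => hammingDist x y = 1 ∧ y ∈ S).card : ℚ) = (b : ℚ) := by
      rw [h1, hb]; rw [h2]
    exact_mod_cast this
  -- splitting the neighbourhood
  have hsplit : ∀ x : Fin n → Bool,
      (Finset.univ.filter fun y => hammingDist x y = 1 ∧ y ∈ S).card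
        + (Finset.univ.filter fun y => hammingDist x y = 1 ∧ y ∉ S).card = n := by
    intro x
    have h := Finset.card_filter_add_card_filter_not
      (s := Finset.univ.filter fun y => hammingDist x y = 1) (p := fun y => y ∈ S)
    rw [Finset.filter_filter, Finset.filter_filter, card_nbr_total x] at h
    exact h
  -- final matrix
  refine ⟨fun i j => if i = 1 then (if j = 1 then a else n - a)
    else (if j = 1 then b else n - b), ?_⟩
  intro x j
  have hc1 : (Finset.univ.filter fun y => hammingDist x y = 1 ∧ chiCol S y = 1)
      = Finset.univ.filter fun y => hammingDist x y = 1 ∧ y ∈ S := by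
    apply Finset.filter_congr
    intro y _
    unfold chiCol
    by_cases h : y ∈ S <;> simp [h]
  have hc0 : (Finset.univ.filter fun y => hammingDist x y = 1 ∧ chiCol S y = 0)
      = Finset.univ.filter fun y => hammingDist x y = 1 ∧ y ∉ S := by
    apply Finset.filter_congr
    intro y _
    unfold chiCol
    by_cases h : y ∈ S <;> simp [h]
  have hale : a ≤ n := by
    have := hsplit x₀; omega
  have hble : b ≤ n := by
    have := hsplit x₁
    rw [hinb x₁ hx₁] at this
    omega
  have h01 : ¬ ((0:Fin 2) = 1) := by decide
  have key1 : (Finset.univ.filter fun y => hammingDist x y = 1 ∧ chiCol S y = 1).card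
      = (if chiCol S x = 1 then (if (1:Fin 2) = 1 then a else n - a)
          else (if (1:Fin 2) = 1 then b else n - b)) := by
    rw [hc1]
    by_cases hx : x ∈ S
    · have hcx : chiCol S x = 1 := by unfold chiCol; rw [if_pos hx]
      rw [hcx, hina x hx, if_pos rfl, if_pos rfl]
    · have hcx : chiCol S x = 0 := by unfold chiCol; rw [if_neg hx]
      rw [hcx, hinb x hx, if_neg h01, if_pos rfl]
  have key0 : (Finset.univ.filter fun y => hammingDist x y = 1 ∧ chiCol S y = 0).card
      = (if chiCol S x = 1 then (if (0:Fin 2) = 1 then a else n - a)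
          else (if (0:Fin 2) = 1 then b else n - b)) := by
    rw [hc0]
    by_cases hx : x ∈ S
    · have hcx : chiCol S x = 1 := by unfold chiCol; rw [if_pos hx]
      have h1 := hsplit x
      rw [hina x hx] at h1
      rw [hcx, if_pos rfl, if_neg h01]
      omega
    · have hcx : chiCol S x = 0 := by unfold chiCol; rw [if_neg hx]
      have h1 := hsplit x
      rw [hinb x hx] at h1
      rw [hcx, if_neg h01, if_neg h01]
      omega
  fin_cases j
  · exact key0
  · exact key1
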